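/- arXiv:0903.2345 — 2 statements merged into one kernel-verified Lean document; each statement's English description precedes it below -/
import Mathlib

section
/- Assume (H) and that g is C² on ℝ^{2d}. Let y ∈ Γ, let α₀ > 0, and let M₃ = sup_{x : ‖x−y‖ ≤ α₀} ∫‖h‖³ p(x,h) dh. Then for every δ > 0 there exists ρ ∈ (0,α₀] such that for all x with 0 < ‖x−y‖ ≤ ρ: |((x−y)/‖x−y‖) · b̃(x)| ≤ (M₃/2)·‖H₁₁g(y,y)‖_op + δ, where ‖·‖_op is the operator norm. -/
open MeasureTheory Real Set
open scoped RealInnerProductSpace ENNReal NNReal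

noncomputable section

abbrev Euc (d : ℕ) := EuclideanSpace ℝ (Fin d)

variable {d : ℕ}

/-- gradient of `g` with respect to its first variable -/
def grad1 (g : Euc d → Euc d → ℝ) (y x : Euc d) : Euc d :=
  gradient (fun z => g z x) y

/-- Hessian of `g` with respect to its first variable, as a continuous bilinear map -/
def hess11 (g : Euc d → Euc d → ℝ) (y x : Euc d) : Euc d →L[ℝ] Euc d →L[ℝ] ℝ :=
  fderiv ℝ (fderiv ℝ (fun z => g z x)) y

/-- set of evolutionary singularities -/
def Gam (g : Euc d → Euc d → ℝ) : Set (Euc d) := {x | grad1 g x x = 0}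

def GamAlpha (g : Euc d → Euc d → ℝ) (α : ℝ) : Set (Euc d) :=
  {x | α ≤ Metric.infDist x (Gam g) ∧ ‖x‖ ≤ 1 / α}

/-- `p` is a measurable symmetric probability-density kernel -/
def IsMutKernel (p : Euc d → Euc d → ℝ) : Prop :=
  Measurable (Function.uncurry p) ∧
  (∀ x h, 0 ≤ p x h) ∧
  (∀ x, Integrable (fun h => p x h)) ∧
  (∀ x, (∫ h, p x h) = 1) ∧
  (∀ x h, p x (-h) = p x h)

/-- Assumption (H2) -/
def H2 (p : Euc d → Euc d → ℝ) : Prop :=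
  (∀ x, Integrable (fun h : Euc d => ‖h‖ ^ 3 * p x h)) ∧
  (∃ M : ℝ, ∀ x, (∫ h : Euc d, ‖h‖ ^ 3 * p x h) ≤ M) ∧
  ∃ m : ℝ → ℝ, Measurable m ∧ (∀ r, 0 ≤ m r) ∧
    Integrable (fun h : Euc d => (‖h‖ ^ 2 ⊔ ‖h‖ ^ 3) * m ‖h‖) ∧
    (∀ x y h, |p x h - p y h| ≤ ‖x - y‖ * m ‖h‖) ∧
    (∀ x h, p x h ≤ m ‖h‖)

/-- Assumption (H1) -/
def H1 (g : Euc d → Euc d → ℝ) : Prop :=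
  (∀ x : Euc d, ContDiff ℝ 2 (fun z => g z x)) ∧
  (∃ C : ℝ, ∀ y x : Euc d, ‖grad1 g y x‖ ≤ C) ∧
  (∃ K : ℝ≥0, LipschitzWith K (fun q : Euc d × Euc d => grad1 g q.1 q.2)) ∧
  (∃ C : ℝ, ∀ y x : Euc d, ‖hess11 g y x‖ ≤ C) ∧
  (∃ K : ℝ≥0, LipschitzWith K (fun q : Euc d × Euc d => hess11 g q.1 q.2))

/-- drift coefficient b -/
def bCoeff (g p : Euc d → Euc d → ℝ) (x : Euc d) : Euc d :=
  (WithLp.equiv 2 (Fin d → ℝ)).symm fun k =>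
    ∫ h : Euc d, h k * max (⟪grad1 g x x, h⟫) 0 * p x h

/-- diffusion matrix a -/
def aMat (g p : Euc d → Euc d → ℝ) (x : Euc d) : Matrix (Fin d) (Fin d) ℝ :=
  Matrix.of fun k l => ∫ h : Euc d, h k * h l * max (⟪h, grad1 g x x⟫) 0 * p x h

/-- second-order drift coefficient b-tilde -/
def btCoeff (g p : Euc d → Euc d → ℝ) (x : Euc d) : Euc d :=
  (WithLp.equiv 2 (Fin d → ℝ)).symm fun k =>
    (1 / 2) * ∫ h in {h : Euc d | 0 < ⟪h, grad1 g x x⟫},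
      h k * hess11 g x x h h * p x h

/-- quadratic form sᵀ a(x) s -/
def quadA (g p : Euc d → Euc d → ℝ) (x s : Euc d) : ℝ :=
  ∑ k, ∑ l, s k * aMat g p x k l * s l

/-- quadratic form sᵀ a(x)⁻¹ s -/
def quadAInv (g p : Euc d → Euc d → ℝ) (x s : Euc d) : ℝ :=
  ∑ k, ∑ l, s k * (aMat g p x)⁻¹ k l * s l

/-- full Hessian of `g` (as a function on the product space) at `(y,x)` -/
def hessF (g : Euc d → Euc d → ℝ) (y x : Euc d) :
    (Euc d × Euc d) →L[ℝ] (Euc d × Euc d) →L[ℝ] ℝ :=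
  fderiv ℝ (fderiv ℝ (fun q : Euc d × Euc d => g q.1 q.2)) (y, x)

/-- action of a matrix on a vector of `Euc d` -/
def mulVecE (M : Matrix (Fin d) (Fin d) ℝ) (v : Euc d) : Euc d :=
  (WithLp.equiv 2 (Fin d → ℝ)).symm (M.mulVec (WithLp.equiv 2 (Fin d → ℝ) v))

theorem stmt8 {d : ℕ} (hd : 1 ≤ d) (g p : Euc d → Euc d → ℝ)
    (hker : IsMutKernel p) (hH1 : H1 g) (hH2 : H2 p)
    (hg2 : ContDiff ℝ 2 (fun q : Euc d × Euc d => g q.1 q.2))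
    (y : Euc d) (hy : y ∈ Gam g) (α₀ : ℝ) (hα₀ : 0 < α₀) (M₃ : ℝ)
    (hM₃ : ∀ x : Euc d, ‖x - y‖ ≤ α₀ → (∫ h : Euc d, ‖h‖ ^ 3 * p x h) ≤ M₃) :
    ∀ δ : ℝ, 0 < δ → ∃ ρ : ℝ, 0 < ρ ∧ ρ ≤ α₀ ∧
      ∀ x : Euc d, x ≠ y → ‖x - y‖ ≤ ρ →
        |⟪(‖x - y‖)⁻¹ • (x - y), btCoeff g p x⟫| ≤ M₃ / 2 * ‖hess11 g y y‖ + δ := by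
  intro δ hδ
  obtain ⟨hpm, hp0, hpint, hp1, hpsym⟩ := hker
  obtain ⟨hI3, -⟩ := hH2
  obtain ⟨-, -, -, -, K, hK⟩ := hH1
  have hM₃0 : 0 ≤ M₃ :=
    le_trans (integral_nonneg fun h => mul_nonneg (by positivity) (hp0 y h))
      (hM₃ y (by simpa using hα₀.le))
  set D : ℝ := 1 + M₃ / 2 * K with hD
  have hD0 : 0 < D := by positivity
  refine ⟨min α₀ (δ / D), lt_min hα₀ (by positivity), min_le_left _ _, ?_⟩
  intro x hxy hxρ
  have hx0 : (0:ℝ) < ‖x - y‖ := norm_pos_iff.mpr (sub_ne_zero.mpr hxy)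
  have hxα : ‖x - y‖ ≤ α₀ := hxρ.trans (min_le_left _ _)
  have hxδ : ‖x - y‖ ≤ δ / D := hxρ.trans (min_le_right _ _)
  set u : Euc d := (‖x - y‖)⁻¹ • (x - y) with hu_def
  have hunorm : ‖u‖ = 1 := by
    rw [hu_def, norm_smul, norm_inv, norm_norm, inv_mul_cancel₀ hx0.ne']
  have hcoord : ∀ (v : Euc d) (k : Fin d), |v k| ≤ ‖v‖ := by
    intro v k
    calc |v k| = |⟪EuclideanSpace.single k (1:ℝ), v⟫| := by
          rw [EuclideanSpace.inner_single_left]; simp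
      _ ≤ ‖EuclideanSpace.single k (1:ℝ)‖ * ‖v‖ := abs_real_inner_le_norm _ _
      _ = ‖v‖ := by rw [EuclideanSpace.norm_single]; simp
  have hu1 : ∀ k, |u k| ≤ 1 := fun k => (hcoord u k).trans_eq hunorm
  set H := hess11 g x x with hH_def
  set S : Set (Euc d) := {h : Euc d | 0 < ⟪h, grad1 g x x⟫} with hS_def
  have hpxm : Measurable fun h : Euc d => p x h :=
    hpm.comp (measurable_const.prodMk measurable_id)
  have hdom : Integrable (fun h : Euc d => ‖H‖ * (‖h‖ ^ 3 * p x h)) (volume.restrict S) :=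
    ((hI3 x).const_mul _).restrict
  have hcont : Continuous fun h : Euc d => H h h :=
    H.continuous₂.comp (continuous_id.prodMk continuous_id)
  have hbound : ∀ (k : Fin d) (h : Euc d),
      ‖u k * (h k * H h h * p x h)‖ ≤ ‖H‖ * (‖h‖ ^ 3 * p x h) := by
    intro k h
    have hk : |h k| ≤ ‖h‖ := hcoord h k
    have hHh : |H h h| ≤ ‖H‖ * ‖h‖ * ‖h‖ := by
      have := H.le_opNorm₂ h h
      rwa [Real.norm_eq_abs] at this
    have h1 : ‖u k * (h k * H h h * p x h)‖ = |u k| * |h k| * |H h h| * p x h := by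
      rw [Real.norm_eq_abs, abs_mul, abs_mul, abs_mul, abs_of_nonneg (hp0 x h)]; ring
    rw [h1]
    have A : |u k| * |h k| ≤ 1 * ‖h‖ := mul_le_mul (hu1 k) hk (abs_nonneg _) zero_le_one
    have B : |u k| * |h k| * |H h h| ≤ 1 * ‖h‖ * (‖H‖ * ‖h‖ * ‖h‖) :=
      mul_le_mul A hHh (abs_nonneg _) (by positivity)
    calc |u k| * |h k| * |H h h| * p x h ≤ 1 * ‖h‖ * (‖H‖ * ‖h‖ * ‖h‖) * p x h :=
          mul_le_mul_of_nonneg_right B (hp0 x h)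
      _ = ‖H‖ * (‖h‖ ^ 3 * p x h) := by ring
  have hint : ∀ k : Fin d,
      Integrable (fun h : Euc d => u k * (h k * H h h * p x h)) (volume.restrict S) := by
    intro k
    refine Integrable.mono' hdom ?_ (Filter.Eventually.of_forall (hbound k))
    apply AEStronglyMeasurable.restrict
    exact (measurable_const.mul
      (((PiLp.continuous_apply 2 _ k).measurable.mul hcont.measurable).mul hpxm)).aestronglyMeasurable
  have key : ⟪u, btCoeff g p x⟫ = (1/2) * ∫ h in S, ⟪u, h⟫ * H h h * p x h := by
    have hinner : ∀ v w : Euc d, ⟪v, w⟫ = ∑ k, v k * w k := by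
      intro v w
      simp [PiLp.inner_apply, RCLike.inner_apply, mul_comm]
    rw [hinner]
    simp only [btCoeff, WithLp.equiv_symm_apply, WithLp.ofLp_toLp, ← hH_def, ← hS_def]
    have step1 : ∀ k : Fin d,
        u k * ((1/2) * ∫ h in S, h k * H h h * p x h)
          = (1/2) * ∫ h in S, u k * (h k * H h h * p x h) := by
      intro k
      rw [integral_const_mul]; ring
    rw [Finset.sum_congr rfl fun k _ => step1 k, ← Finset.mul_sum,
      ← integral_finset_sum _ fun k _ => hint k]
    congr 1
    refine integral_congr_ae (Filter.Eventually.of_forall fun h => ?_)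
    show ∑ k, u k * (h k * H h h * p x h) = ⟪u, h⟫ * H h h * p x h
    rw [hinner]
    rw [Finset.sum_mul, Finset.sum_mul]
    exact Finset.sum_congr rfl fun k _ => by ring
  have hfint : Integrable (fun h : Euc d => ⟪u, h⟫ * H h h * p x h) (volume.restrict S) := by
    refine Integrable.mono' hdom ?_ ?_
    · apply AEStronglyMeasurable.restrict
      exact (((Continuous.measurable (continuous_const.inner continuous_id :
        Continuous fun h : Euc d => ⟪u, h⟫)).mul
        hcont.measurable).mul hpxm).aestronglyMeasurable
    · refine Filter.Eventually.of_forall fun h => ?_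
      have h1 : ‖⟪u, h⟫ * H h h * p x h‖ = |⟪u, h⟫| * |H h h| * p x h := by
        rw [Real.norm_eq_abs, abs_mul, abs_mul, abs_of_nonneg (hp0 x h)]
      rw [h1]
      have h2 : |⟪u, h⟫| ≤ ‖h‖ := by
        have := abs_real_inner_le_norm u h
        rwa [hunorm, one_mul] at this
      have hHh : |H h h| ≤ ‖H‖ * ‖h‖ * ‖h‖ := by
        have := H.le_opNorm₂ h h
        rwa [Real.norm_eq_abs] at this
      have B : |⟪u, h⟫| * |H h h| ≤ ‖h‖ * (‖H‖ * ‖h‖ * ‖h‖) :=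
        mul_le_mul h2 hHh (abs_nonneg _) (norm_nonneg _)
      calc |⟪u, h⟫| * |H h h| * p x h ≤ ‖h‖ * (‖H‖ * ‖h‖ * ‖h‖) * p x h :=
            mul_le_mul_of_nonneg_right B (hp0 x h)
        _ = ‖H‖ * (‖h‖ ^ 3 * p x h) := by ring
  have hS3 : (∫ h in S, ‖h‖ ^ 3 * p x h) ≤ M₃ := by
    refine le_trans (setIntegral_le_integral (hI3 x) ?_) (hM₃ x hxα)
    exact Filter.Eventually.of_forall fun h => mul_nonneg (by positivity) (hp0 x h)
  have habs : |∫ h in S, ⟪u, h⟫ * H h h * p x h| ≤ ‖H‖ * M₃ := by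
    calc |∫ h in S, ⟪u, h⟫ * H h h * p x h|
        ≤ ∫ h in S, ‖⟪u, h⟫ * H h h * p x h‖ := by
          rw [← Real.norm_eq_abs]; exact norm_integral_le_integral_norm _
      _ ≤ ∫ h in S, ‖H‖ * (‖h‖ ^ 3 * p x h) := by
          refine integral_mono hfint.norm hdom fun h => ?_
          have h1 : ‖⟪u, h⟫ * H h h * p x h‖ = |⟪u, h⟫| * |H h h| * p x h := by
            rw [Real.norm_eq_abs, abs_mul, abs_mul, abs_of_nonneg (hp0 x h)]
          rw [h1]
          have h2 : |⟪u, h⟫| ≤ ‖h‖ := by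
            have := abs_real_inner_le_norm u h
            rwa [hunorm, one_mul] at this
          have hHh : |H h h| ≤ ‖H‖ * ‖h‖ * ‖h‖ := by
            have := H.le_opNorm₂ h h
            rwa [Real.norm_eq_abs] at this
          have B : |⟪u, h⟫| * |H h h| ≤ ‖h‖ * (‖H‖ * ‖h‖ * ‖h‖) :=
            mul_le_mul h2 hHh (abs_nonneg _) (norm_nonneg _)
          calc |⟪u, h⟫| * |H h h| * p x h ≤ ‖h‖ * (‖H‖ * ‖h‖ * ‖h‖) * p x h :=
                mul_le_mul_of_nonneg_right B (hp0 x h)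
            _ = ‖H‖ * (‖h‖ ^ 3 * p x h) := by ring
      _ = ‖H‖ * ∫ h in S, ‖h‖ ^ 3 * p x h := integral_const_mul _ _
      _ ≤ ‖H‖ * M₃ := mul_le_mul_of_nonneg_left hS3 (norm_nonneg H)
  have hlip : ‖H‖ ≤ ‖hess11 g y y‖ + K * ‖x - y‖ := by
    have h1 := hK.dist_le_mul (x, x) (y, y)
    have h2 : dist ((x, x) : Euc d × Euc d) (y, y) = ‖x - y‖ := by
      rw [Prod.dist_eq, max_self, dist_eq_norm]
    have h3 : ‖H‖ - ‖hess11 g y y‖ ≤ dist H (hess11 g y y) :=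
      (norm_sub_norm_le H (hess11 g y y)).trans_eq (dist_eq_norm H (hess11 g y y)).symm
    simp only [hH_def] at h3 ⊢
    rw [h2] at h1
    linarith
  rw [key, abs_mul, abs_of_nonneg (by norm_num : (0:ℝ) ≤ 1/2)]
  have hKnn : (0:ℝ) ≤ K := K.coe_nonneg
  have hδD : D * (δ / D) = δ := mul_div_cancel₀ δ hD0.ne'
  calc (1/2) * |∫ h in S, ⟪u, h⟫ * H h h * p x h| ≤ (1/2) * (‖H‖ * M₃) := by linarith
    _ ≤ (1/2) * ((‖hess11 g y y‖ + K * ‖x - y‖) * M₃) :=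
        mul_le_mul_of_nonneg_left (mul_le_mul_of_nonneg_right hlip hM₃0) (by norm_num)
    _ = M₃ / 2 * ‖hess11 g y y‖ + M₃ / 2 * K * ‖x - y‖ := by ring
    _ ≤ M₃ / 2 * ‖hess11 g y y‖ + δ := by
        have h1 : M₃ / 2 * K ≤ D := by
          rw [hD]; linarith
        have h4 : M₃ / 2 * (K : ℝ) * ‖x - y‖ ≤ D * (δ / D) :=
          mul_le_mul h1 hxδ (norm_nonneg _) hD0.le
        rw [hδD] at h4
        linarith
end
end

section
/- Assume (H) and that g is C² on ℝ^{2d}. Let y be a point of Γ and α₀ > 0 with B(y,α₀) ∩ Γ = {y}. Suppose the matrix D = H₁₁g(y,y) + H₁₂g(y,y) is invertible, and let λ_y > 0 be the smallest eigenvalue of DᵀD. Set C = inf over x with ‖x−y‖ ≤ α₀ and over unit vectors u,v ∈ ℝ^d of ∫_{ℝ^d}|h·u|²|h·v| p(x,h) dh. Then for every δ > 0 there exists a neighborhood U of y such that for all x ∈ U and all s ∈ ℝ^d: sᵀ a(x) s ≥ ((C·√λ_y)/2 − δ)·‖x−y‖·‖s‖². -/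
open MeasureTheory Real Set
open scoped RealInnerProductSpace ENNReal NNReal

noncomputable section

variable {d : ℕ}

section Helpers

variable {d : ℕ}

lemma coord_abs_le_norm (h : Euc d) (k : Fin d) : |h k| ≤ ‖h‖ := by
  have h2 := abs_real_inner_le_norm h (EuclideanSpace.single k (1:ℝ))
  simp [EuclideanSpace.inner_single_right] at h2
  simpa using h2

lemma cont_coord (k : Fin d) : Continuous fun h : Euc d => h k := by fun_prop

lemma meas_p {p : Euc d → Euc d → ℝ} (hker : IsMutKernel p) (x : Euc d) :
    Measurable fun h => p x h := by
  have : (fun h => p x h) = (Function.uncurry p) ∘ (fun h => (x, h)) := rfl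
  rw [this]
  exact hker.1.comp (measurable_const.prodMk measurable_id)

lemma integrable_mul_p {p : Euc d → Euc d → ℝ} (hker : IsMutKernel p) (hH2 : H2 p)
    (x : Euc d) {f : Euc d → ℝ} (hf : Continuous f) {c : ℝ} (hc : 0 ≤ c)
    (hb : ∀ h, |f h| ≤ c * ‖h‖ ^ 3) :
    Integrable fun h => f h * p x h := by
  obtain ⟨-, -, m, hm_meas, hm_nonneg, hm_int, -, hpm⟩ := hH2
  refine (hm_int.const_mul c).mono' ((hf.measurable.mul (meas_p hker x)).aestronglyMeasurable)
    (Filter.Eventually.of_forall fun h => ?_)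
  have h1 : ‖f h * p x h‖ = |f h| * p x h := by
    rw [norm_mul, Real.norm_eq_abs, Real.norm_eq_abs, abs_of_nonneg (hker.2.1 x h)]
  rw [h1]
  calc |f h| * p x h ≤ (c * ‖h‖ ^ 3) * m ‖h‖ :=
        mul_le_mul (hb h) (hpm x h) (hker.2.1 x h) (by positivity)
    _ ≤ c * ((‖h‖ ^ 2 ⊔ ‖h‖ ^ 3) * m ‖h‖) := by
        rw [mul_assoc]
        gcongr
        · exact hm_nonneg _
        · exact le_max_right _ _

lemma abs_max_inner_le (h w : Euc d) : |max ⟪h, w⟫ 0| ≤ ‖h‖ * ‖w‖ := by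
  rw [abs_of_nonneg (le_max_right _ _)]
  exact max_le (le_trans (le_abs_self _) (abs_real_inner_le_norm h w)) (by positivity)

lemma integrable_hkl {p : Euc d → Euc d → ℝ} (hker : IsMutKernel p) (hH2 : H2 p)
    (x w : Euc d) (k l : Fin d) :
    Integrable fun h : Euc d => h k * h l * max ⟪h, w⟫ 0 * p x h := by
  refine integrable_mul_p hker hH2 x ?_ (norm_nonneg w) fun h => ?_
  · exact ((cont_coord k).mul (cont_coord l)).mul
      ((continuous_id.inner continuous_const).max continuous_const)
  · calc |h k * h l * max ⟪h, w⟫ 0| = |h k| * |h l| * |max ⟪h, w⟫ 0| := by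
          rw [abs_mul, abs_mul]
      _ ≤ ‖h‖ * ‖h‖ * (‖h‖ * ‖w‖) :=
          mul_le_mul (mul_le_mul (coord_abs_le_norm h k) (coord_abs_le_norm h l)
              (abs_nonneg _) (norm_nonneg _))
            (abs_max_inner_le h w) (abs_nonneg _) (by positivity)
      _ = ‖w‖ * ‖h‖ ^ 3 := by ring

lemma integrable_sq_max {p : Euc d → Euc d → ℝ} (hker : IsMutKernel p) (hH2 : H2 p)
    (x w s : Euc d) :
    Integrable fun h : Euc d => ⟪h, s⟫ ^ 2 * max ⟪h, w⟫ 0 * p x h := by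
  refine integrable_mul_p hker hH2 x ?_ (c := ‖s‖ ^ 2 * ‖w‖) (by positivity) fun h => ?_
  · exact ((continuous_id.inner continuous_const).pow 2).mul
      ((continuous_id.inner continuous_const).max continuous_const)
  · calc |⟪h, s⟫ ^ 2 * max ⟪h, w⟫ 0| = |⟪h, s⟫| ^ 2 * |max ⟪h, w⟫ 0| := by
          rw [abs_mul, abs_pow]
      _ ≤ (‖h‖ * ‖s‖) ^ 2 * (‖h‖ * ‖w‖) := by
          refine mul_le_mul (by
              have := abs_real_inner_le_norm h s
              exact pow_le_pow_left₀ (abs_nonneg _) this 2)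
            (abs_max_inner_le h w) (abs_nonneg _) (by positivity)
      _ = ‖s‖ ^ 2 * ‖w‖ * ‖h‖ ^ 3 := by ring

lemma quadA_eq {g p : Euc d → Euc d → ℝ} (hker : IsMutKernel p) (hH2 : H2 p)
    (x s : Euc d) :
    quadA g p x s = ∫ h : Euc d, ⟪h, s⟫ ^ 2 * max ⟪h, grad1 g x x⟫ 0 * p x h := by
  set w := grad1 g x x with hw
  have hint : ∀ k l : Fin d,
      Integrable fun h : Euc d => s k * (h k * h l * max ⟪h, w⟫ 0 * p x h) * s l := by
    intro k l
    simpa [mul_comm, mul_assoc, mul_left_comm] using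
      (((integrable_hkl hker hH2 x w k l).const_mul (s k)).mul_const (s l))
  calc quadA g p x s
      = ∑ k, ∑ l, ∫ h : Euc d, s k * (h k * h l * max ⟪h, w⟫ 0 * p x h) * s l := by
        unfold quadA aMat
        refine Finset.sum_congr rfl fun k _ => Finset.sum_congr rfl fun l _ => ?_
        simp only [Matrix.of_apply]
        rw [integral_mul_const, integral_const_mul]
    _ = ∫ h : Euc d, ∑ k, ∑ l, s k * (h k * h l * max ⟪h, w⟫ 0 * p x h) * s l := by
        rw [MeasureTheory.integral_finset_sum]
        · exact Finset.sum_congr rfl fun k _ =>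
            (MeasureTheory.integral_finset_sum _ fun l _ => hint k l).symm
        · exact fun k _ => integrable_finset_sum _ fun l _ => hint k l
    _ = ∫ h : Euc d, ⟪h, s⟫ ^ 2 * max ⟪h, w⟫ 0 * p x h := by
        refine MeasureTheory.integral_congr_ae (Filter.Eventually.of_forall fun h => ?_)
        dsimp only
        have hin : ⟪h, s⟫ = ∑ i, h i * s i := by
          simp [PiLp.inner_apply, RCLike.inner_apply]
          exact Finset.sum_congr rfl fun i _ => mul_comm _ _
        rw [hin, sq, Finset.sum_mul_sum]
        rw [Finset.sum_mul, Finset.sum_mul]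
        refine Finset.sum_congr rfl fun k _ => ?_
        rw [Finset.sum_mul, Finset.sum_mul]
        exact Finset.sum_congr rfl fun l _ => by ring

lemma half_eq {p : Euc d → Euc d → ℝ} (hker : IsMutKernel p) (hH2 : H2 p)
    (x w s : Euc d) :
    ∫ h : Euc d, ⟪h, s⟫ ^ 2 * max ⟪h, w⟫ 0 * p x h
      = (1/2) * ∫ h : Euc d, ⟪h, s⟫ ^ 2 * |⟪h, w⟫| * p x h := by
  set f : Euc d → ℝ := fun h => ⟪h, s⟫ ^ 2 * max ⟪h, w⟫ 0 * p x h with hf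
  set fneg : Euc d → ℝ := fun h => ⟪h, s⟫ ^ 2 * max (-⟪h, w⟫) 0 * p x h with hfneg
  have hcompose : ∀ h, f (-h) = fneg h := by
    intro h
    simp only [f, fneg, inner_neg_left, neg_neg, hker.2.2.2.2 x h]
    ring_nf
  have h1 : ∫ h, fneg h = ∫ h, f h := by
    rw [← integral_neg_eq_self f volume]
    exact MeasureTheory.integral_congr_ae (Filter.Eventually.of_forall fun h => (hcompose h).symm)
  have hif : Integrable f := integrable_sq_max hker hH2 x w s
  have hifn : Integrable fneg := by
    have := (integrable_sq_max hker hH2 x (-w) s)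
    simpa [inner_neg_right] using this
  have h2 : (∫ h, f h) + ∫ h, fneg h = ∫ h : Euc d, ⟪h, s⟫ ^ 2 * |⟪h, w⟫| * p x h := by
    rw [← MeasureTheory.integral_add hif hifn]
    refine MeasureTheory.integral_congr_ae (Filter.Eventually.of_forall fun h => ?_)
    simp only [f, fneg, Pi.add_apply]
    rw [← max_zero_add_max_neg_zero_eq_abs_self (⟪h, w⟫)]
    ring
  linarith

lemma key_bound {g p : Euc d → Euc d → ℝ} (hker : IsMutKernel p) (hH2 : H2 p)
    {C : ℝ} (hC0 : 0 ≤ C) (x s : Euc d)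
    (hCle : ∀ u v : Euc d, ‖u‖ = 1 → ‖v‖ = 1 →
      C ≤ ∫ h : Euc d, |⟪h, u⟫| ^ 2 * |⟪h, v⟫| * p x h) :
    C / 2 * (‖grad1 g x x‖ * ‖s‖ ^ 2) ≤ quadA g p x s := by
  rcases eq_or_ne s 0 with rfl | hs
  · rw [quadA_eq hker hH2]
    simp
  rcases eq_or_ne (grad1 g x x) 0 with hw0 | hw0
  · rw [quadA_eq hker hH2, hw0]
    simp
  set w := grad1 g x x with hw
  set u := ‖s‖⁻¹ • s with hu
  set v := ‖w‖⁻¹ • w with hv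
  have hun : ‖u‖ = 1 := norm_smul_inv_norm hs
  have hvn : ‖v‖ = 1 := norm_smul_inv_norm hw0
  have hC := hCle u v hun hvn
  have hrw : (∫ h : Euc d, ⟪h, s⟫ ^ 2 * |⟪h, w⟫| * p x h)
      = (‖s‖ ^ 2 * ‖w‖) * ∫ h : Euc d, |⟪h, u⟫| ^ 2 * |⟪h, v⟫| * p x h := by
    rw [← integral_const_mul]
    refine MeasureTheory.integral_congr_ae (Filter.Eventually.of_forall fun h => ?_)
    dsimp only
    have hs' : s = ‖s‖ • u := by
      rw [hu, smul_smul, mul_inv_cancel₀ (norm_ne_zero_iff.mpr hs), one_smul]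
    have hw' : w = ‖w‖ • v := by
      rw [hv, smul_smul, mul_inv_cancel₀ (norm_ne_zero_iff.mpr hw0), one_smul]
    have e1 : ⟪h, s⟫ = ‖s‖ * ⟪h, u⟫ := by
      conv_lhs => rw [hs']
      exact real_inner_smul_right _ _ _
    have e2 : |⟪h, w⟫| = ‖w‖ * |⟪h, v⟫| := by
      conv_lhs => rw [hw']
      rw [real_inner_smul_right, abs_mul, abs_of_nonneg (norm_nonneg w)]
    rw [e1, e2, mul_pow, ← sq_abs (⟪h, u⟫)]
    ring
  rw [quadA_eq hker hH2, half_eq hker hH2 x w s, hrw]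
  have hnn : (0:ℝ) ≤ ‖s‖ ^ 2 * ‖w‖ := by positivity
  nlinarith [mul_le_mul_of_nonneg_left hC hnn]

lemma grad1_hasFDerivAt {g : Euc d → Euc d → ℝ}
    (hg2 : ContDiff ℝ 2 (fun q : Euc d × Euc d => g q.1 q.2))
    (y : Euc d) (L : Euc d →L[ℝ] Euc d)
    (hL : ∀ v w : Euc d, ⟪L v, w⟫ = hessF g y y (w, 0) (v, v)) :
    HasFDerivAt (fun x => grad1 g x x) L y := by
  set G : Euc d × Euc d → ℝ := fun q => g q.1 q.2 with hG
  have hdiffG : Differentiable ℝ G := hg2.differentiable (by norm_num)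
  have hG1 : ContDiff ℝ 1 (fderiv ℝ G) := hg2.fderiv_right (by norm_num)
  have hdd : HasFDerivAt (fderiv ℝ G) (hessF g y y) (y, y) :=
    ((hG1.differentiable one_ne_zero) (y, y)).hasFDerivAt
  have hsymm : ∀ a b : Euc d × Euc d, hessF g y y a b = hessF g y y b a :=
    second_derivative_symmetric_of_eventually
      (Filter.Eventually.of_forall fun q => (hdiffG q).hasFDerivAt) hdd
  set dg : Euc d →L[ℝ] Euc d × Euc d :=
    (ContinuousLinearMap.id ℝ (Euc d)).prod (ContinuousLinearMap.id ℝ (Euc d)) with hdg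
  have hdiag : HasFDerivAt (fun x : Euc d => (x, x)) dg y :=
    (hasFDerivAt_id y).prodMk (hasFDerivAt_id y)
  have hψ : HasFDerivAt ((fderiv ℝ G) ∘ (fun x : Euc d => (x, x)))
      ((hessF g y y).comp dg) y :=
    HasFDerivAt.comp (f := fun x : Euc d => (x, x)) y hdd hdiag
  -- single basis vectors
  set e : Fin d → Euc d := fun k => EuclideanSpace.single k (1:ℝ) with he
  -- coordinates of grad1
  have hcoord : ∀ (x : Euc d) (j : Fin d),
      grad1 g x x j = fderiv ℝ G (x, x) (e j, 0) := by
    intro x j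
    have h1 : HasFDerivAt (fun z => g z x)
        ((fderiv ℝ G (x, x)).comp (ContinuousLinearMap.inl ℝ (Euc d) (Euc d))) x :=
      HasFDerivAt.comp (f := fun z : Euc d => (z, x)) x ((hdiffG (x, x)).hasFDerivAt)
        (hasFDerivAt_prodMk_left x x)
    have h2 : fderiv ℝ (fun z => g z x) x
        = (fderiv ℝ G (x, x)).comp (ContinuousLinearMap.inl ℝ (Euc d) (Euc d)) := h1.fderiv
    have h3 : grad1 g x x j = ⟪grad1 g x x, e j⟫ := by
      simp [he, EuclideanSpace.inner_single_right]
    rw [h3]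
    show ⟪gradient (fun z => g z x) x, e j⟫ = _
    rw [gradient, InnerProductSpace.toDual_symm_apply, h2]
    rfl
  -- derivative of each coordinate function
  have hFk : ∀ k : Fin d, HasFDerivAt (fun x : Euc d => fderiv ℝ G (x, x) (e k, 0))
      ((ContinuousLinearMap.apply ℝ ℝ ((e k, 0) : Euc d × Euc d)).comp
        ((hessF g y y).comp dg)) y := by
    intro k
    exact (ContinuousLinearMap.apply ℝ ℝ ((e k, 0) : Euc d × Euc d)).hasFDerivAt.comp y hψ
  have hsum : HasFDerivAt (fun x : Euc d => ∑ k, (fderiv ℝ G (x, x) (e k, 0)) • e k)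
      (∑ k, (((ContinuousLinearMap.apply ℝ ℝ ((e k, 0) : Euc d × Euc d)).comp
        ((hessF g y y).comp dg)).smulRight (e k))) y :=
    HasFDerivAt.fun_sum fun k _ => (hFk k).smul_const (e k)
  have hval : ∀ (v : Euc d) (j : Fin d), v j = ⟪v, e j⟫ := fun v j => by
    simp [he, EuclideanSpace.inner_single_right]
  have hsumval : ∀ (c : Fin d → ℝ) (j : Fin d), (∑ k, c k • e k) j = c j := by
    intro c j
    rw [hval (∑ k, c k • e k) j]
    rw [sum_inner]
    simp only [real_inner_smul_left]
    have : ∀ k : Fin d, ⟪e k, e j⟫ = if k = j then (1:ℝ) else 0 := by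
      intro k
      simp [he, EuclideanSpace.inner_single_right, EuclideanSpace.single_apply, eq_comm]
    simp only [this, mul_ite, mul_one, mul_zero]
    simp
  have hrepr : (fun x : Euc d => grad1 g x x)
      = fun x : Euc d => ∑ k, (fderiv ℝ G (x, x) (e k, 0)) • e k := by
    funext x
    apply PiLp.ext
    intro j
    rw [hcoord x j, hsumval _ j]
  have hEq : (∑ k, (((ContinuousLinearMap.apply ℝ ℝ ((e k, 0) : Euc d × Euc d)).comp
        ((hessF g y y).comp dg)).smulRight (e k))) = L := by
    apply ContinuousLinearMap.ext
    intro v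
    have happ : (∑ k, (((ContinuousLinearMap.apply ℝ ℝ ((e k, 0) : Euc d × Euc d)).comp
          ((hessF g y y).comp dg)).smulRight (e k))) v
        = ∑ k, (hessF g y y (v, v) (e k, 0)) • e k := by
      rw [ContinuousLinearMap.sum_apply]
      rfl
    rw [happ]
    apply PiLp.ext
    intro j
    have hLvj : L v j = hessF g y y (v, v) (e j, 0) := by
      have h4 : L v j = ⟪L v, e j⟫ := hval (L v) j
      rw [h4, hL v (e j), hsymm]
    rw [hsumval _ j]
    exact hLvj.symm
  rw [hrepr, ← hEq]
  exact hsum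

end Helpers
theorem stmt9 {d : ℕ} (hd : 1 ≤ d) (g p : Euc d → Euc d → ℝ)
    (hker : IsMutKernel p) (hH1 : H1 g) (hH2 : H2 p)
    (hg2 : ContDiff ℝ 2 (fun q : Euc d × Euc d => g q.1 q.2))
    (y : Euc d) (hy : y ∈ Gam g) (α₀ : ℝ) (hα₀ : 0 < α₀)
    (hball : Metric.closedBall y α₀ ∩ Gam g = {y})
    -- `L` is the matrix `D = H₁₁g(y,y) + H₁₂g(y,y)`, characterized by
    -- `⟪L v, w⟫ = wᵀ H₁₁g(y,y) v + wᵀ H₁₂g(y,y) v`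
    (L : Euc d →L[ℝ] Euc d)
    (hL : ∀ v w : Euc d, ⟪L v, w⟫ = hessF g y y (w, 0) (v, v))
    (hLinv : Function.Bijective L)
    -- `lam` is the smallest eigenvalue of `DᵀD`, characterized via the Rayleigh quotient
    (lam : ℝ) (hlam : 0 < lam)
    (hlam1 : ∀ v : Euc d, lam * ‖v‖ ^ 2 ≤ ‖L v‖ ^ 2)
    (hlam2 : ∃ v : Euc d, v ≠ 0 ∧ ‖L v‖ ^ 2 = lam * ‖v‖ ^ 2) :
    ∀ δ : ℝ, 0 < δ → ∃ U ∈ nhds y, ∀ x ∈ U, ∀ s : Euc d,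
      ((⨅ q : Metric.closedBall y α₀ ×
            Metric.sphere (0 : Euc d) 1 × Metric.sphere (0 : Euc d) 1,
          ∫ h : Euc d, |⟪h, (q.2.1 : Euc d)⟫| ^ 2 * |⟪h, (q.2.2 : Euc d)⟫|
            * p (q.1 : Euc d) h)
          * Real.sqrt lam / 2 - δ) * ‖x - y‖ * ‖s‖ ^ 2 ≤ quadA g p x s := by
  intro δ hδ
  set C : ℝ := ⨅ q : Metric.closedBall y α₀ ×
        Metric.sphere (0 : Euc d) 1 × Metric.sphere (0 : Euc d) 1,
      ∫ h : Euc d, |⟪h, (q.2.1 : Euc d)⟫| ^ 2 * |⟪h, (q.2.2 : Euc d)⟫|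
        * p (q.1 : Euc d) h with hCdef
  have hC0 : 0 ≤ C :=
    Real.iInf_nonneg fun q => MeasureTheory.integral_nonneg fun h =>
      mul_nonneg (mul_nonneg (by positivity) (abs_nonneg _)) (hker.2.1 _ _)
  have hbdd : BddBelow (Set.range fun q : Metric.closedBall y α₀ ×
        Metric.sphere (0 : Euc d) 1 × Metric.sphere (0 : Euc d) 1 =>
      ∫ h : Euc d, |⟪h, (q.2.1 : Euc d)⟫| ^ 2 * |⟪h, (q.2.2 : Euc d)⟫|
        * p (q.1 : Euc d) h) := by
    refine ⟨0, ?_⟩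
    rintro r ⟨q, rfl⟩
    exact MeasureTheory.integral_nonneg fun h =>
      mul_nonneg (mul_nonneg (by positivity) (abs_nonneg _)) (hker.2.1 _ _)
  have hder : HasFDerivAt (fun x => grad1 g x x) L y := grad1_hasFDerivAt hg2 y L hL
  set ε : ℝ := δ / (C + 1) with hεdef
  have hε0 : 0 < ε := div_pos hδ (by linarith)
  have heq : ε * (C + 1) = δ := div_mul_cancel₀ δ (by linarith)
  have hlittle := hder.isLittleO.def hε0
  have hy0 : grad1 g y y = 0 := hy
  have hev : ∀ᶠ x in nhds y, ‖grad1 g x x - L (x - y)‖ ≤ ε * ‖x - y‖ := by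
    filter_upwards [hlittle] with x hx
    simpa [hy0] using hx
  refine ⟨_ ∩ Metric.ball y α₀, Filter.inter_mem hev (Metric.ball_mem_nhds y hα₀), ?_⟩
  rintro x ⟨hx1, hx2⟩ s
  simp only [Set.mem_setOf_eq] at hx1
  have hxball : x ∈ Metric.closedBall y α₀ := Metric.ball_subset_closedBall hx2
  have hCle : ∀ u v : Euc d, ‖u‖ = 1 → ‖v‖ = 1 →
      C ≤ ∫ h : Euc d, |⟪h, u⟫| ^ 2 * |⟪h, v⟫| * p x h := by
    intro u v hu hv
    exact ciInf_le hbdd (⟨⟨x, hxball⟩, ⟨u, by simpa [Metric.mem_sphere] using hu⟩,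
      ⟨v, by simpa [Metric.mem_sphere] using hv⟩⟩)
  have hkey := key_bound (g := g) hker hH2 hC0 x s hCle
  have hnorm : (Real.sqrt lam - ε) * ‖x - y‖ ≤ ‖grad1 g x x‖ := by
    have h1 : Real.sqrt lam * ‖x - y‖ ≤ ‖L (x - y)‖ := by
      have h2 : Real.sqrt (lam * ‖x - y‖ ^ 2) = Real.sqrt lam * ‖x - y‖ := by
        rw [Real.sqrt_mul hlam.le, Real.sqrt_sq (norm_nonneg _)]
      calc Real.sqrt lam * ‖x - y‖ = Real.sqrt (lam * ‖x - y‖ ^ 2) := h2.symm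
        _ ≤ Real.sqrt (‖L (x - y)‖ ^ 2) := Real.sqrt_le_sqrt (hlam1 (x - y))
        _ = ‖L (x - y)‖ := Real.sqrt_sq (norm_nonneg _)
    have h3 : ‖L (x - y)‖ - ‖grad1 g x x‖ ≤ ε * ‖x - y‖ := by
      have h4 := norm_sub_norm_le (L (x - y)) (grad1 g x x)
      have h5 : ‖L (x - y) - grad1 g x x‖ = ‖grad1 g x x - L (x - y)‖ := norm_sub_rev _ _
      linarith [hx1]
    rw [sub_mul]
    linarith
  have h7 : C / 2 * ε ≤ δ := by nlinarith
  have h4 : (C * Real.sqrt lam / 2 - δ) * ‖x - y‖ ≤ C / 2 * ‖grad1 g x x‖ := by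
    have h5 : C / 2 * ((Real.sqrt lam - ε) * ‖x - y‖) ≤ C / 2 * ‖grad1 g x x‖ :=
      mul_le_mul_of_nonneg_left hnorm (by linarith)
    have h6 : (C * Real.sqrt lam / 2 - δ) * ‖x - y‖
        ≤ C / 2 * ((Real.sqrt lam - ε) * ‖x - y‖) := by
      have h8 : 0 ≤ ‖x - y‖ := norm_nonneg _
      nlinarith
    linarith
  calc (C * Real.sqrt lam / 2 - δ) * ‖x - y‖ * ‖s‖ ^ 2
      ≤ (C / 2 * ‖grad1 g x x‖) * ‖s‖ ^ 2 :=
        mul_le_mul_of_nonneg_right h4 (by positivity)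
    _ = C / 2 * (‖grad1 g x x‖ * ‖s‖ ^ 2) := by ring
    _ ≤ quadA g p x s := hkey
end
end
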